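/- Let K be a field and P, Q, R ∈ K[x] with no common factor. If (p₁,q₁,r₁) and (p₂,q₂,r₂) are two syzygies between P, Q, R (i.e., pᵢP + qᵢQ + rᵢR = 0 for i = 1,2), then the cross-product vector (q₁r₂ − q₂r₁, p₂r₁ − p₁r₂, p₁q₂ − p₂q₁) is a K[x]-multiple of (P, Q, R). -/
import Mathlib


open Polynomial

private lemma aux_dvd {K : Type*} [Field K] (a P Q R : K[X])
    (hcop : ∀ d : K[X], d ∣ P → d ∣ Q → d ∣ R → IsUnit d)
    (h1 : P ∣ a * Q) (h2 : P ∣ a * R) : P ∣ a := by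
  classical
  set g1 := EuclideanDomain.gcd Q R with hg1
  set g := EuclideanDomain.gcd P g1 with hg
  have hgP : g ∣ P := EuclideanDomain.gcd_dvd_left _ _
  have hgQ : g ∣ Q := (EuclideanDomain.gcd_dvd_right P g1).trans (EuclideanDomain.gcd_dvd_left _ _)
  have hgR : g ∣ R := (EuclideanDomain.gcd_dvd_right P g1).trans (EuclideanDomain.gcd_dvd_right _ _)
  have hu : IsUnit g := hcop g hgP hgQ hgR
  have hb1 : g1 = Q * EuclideanDomain.gcdA Q R + R * EuclideanDomain.gcdB Q R :=
    EuclideanDomain.gcd_eq_gcd_ab Q R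
  have hb : g = P * EuclideanDomain.gcdA P g1 + g1 * EuclideanDomain.gcdB P g1 :=
    EuclideanDomain.gcd_eq_gcd_ab P g1
  obtain ⟨x, hx⟩ := h1
  obtain ⟨y, hy⟩ := h2
  have hdvd : P ∣ a * g := by
    refine ⟨a * EuclideanDomain.gcdA P g1 +
      (x * EuclideanDomain.gcdA Q R + y * EuclideanDomain.gcdB Q R) *
        EuclideanDomain.gcdB P g1, ?_⟩
    linear_combination a * hb + (EuclideanDomain.gcdB P g1) * a * hb1 +
      (EuclideanDomain.gcdA Q R * EuclideanDomain.gcdB P g1) * hx +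
      (EuclideanDomain.gcdB Q R * EuclideanDomain.gcdB P g1) * hy
  exact (IsUnit.dvd_mul_right hu).mp hdvd

theorem cross_product_of_syzygies_is_multiple {K : Type*} [Field K]
    (P Q R p₁ q₁ r₁ p₂ q₂ r₂ : K[X])
    (hcop : ∀ d : K[X], d ∣ P → d ∣ Q → d ∣ R → IsUnit d)
    (h₁ : p₁ * P + q₁ * Q + r₁ * R = 0)
    (h₂ : p₂ * P + q₂ * Q + r₂ * R = 0) :
    ∃ f : K[X],
      q₁ * r₂ - q₂ * r₁ = f * P ∧
      p₂ * r₁ - p₁ * r₂ = f * Q ∧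
      p₁ * q₂ - p₂ * q₁ = f * R := by
  set a := q₁ * r₂ - q₂ * r₁ with ha
  set b := p₂ * r₁ - p₁ * r₂ with hb
  set c := p₁ * q₂ - p₂ * q₁ with hc
  have e1 : a * Q = b * P := by rw [ha, hb]; linear_combination r₂ * h₁ - r₁ * h₂
  have e2 : a * R = c * P := by rw [ha, hc]; linear_combination q₁ * h₂ - q₂ * h₁
  have e3 : b * R = c * Q := by rw [hb, hc]; linear_combination p₂ * h₁ - p₁ * h₂
  by_cases hP : P = 0
  · by_cases hQ : Q = 0
    · -- P = Q = 0, so R is a unit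
      have hR : IsUnit R := hcop R (hP ▸ dvd_zero R) (hQ ▸ dvd_zero R) dvd_rfl
      have hr₁ : r₁ = 0 := by
        have := h₁; rw [hP, hQ] at this; simp at this
        rcases this with h | h
        · exact h
        · exact absurd h hR.ne_zero
      have hr₂ : r₂ = 0 := by
        have := h₂; rw [hP, hQ] at this; simp at this
        rcases this with h | h
        · exact h
        · exact absurd h hR.ne_zero
      obtain ⟨u, hu⟩ := hR
      refine ⟨c * ↑u⁻¹, ?_, ?_, ?_⟩
      · rw [ha, hr₁, hr₂, hP]; ring
      · rw [hb, hr₁, hr₂, hQ]; ring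
      · rw [← hu, mul_assoc]; simp
    · -- P = 0, Q ≠ 0 : show Q ∣ b
      have hQb : Q ∣ b := aux_dvd b Q P R
        (fun d hP' hQ' hR' => hcop d hQ' hP' hR')
        ⟨a, by linear_combination -e1⟩ ⟨c, by linear_combination e3⟩
      obtain ⟨f, hf⟩ := hQb
      refine ⟨f, ?_, by rw [hf]; ring, ?_⟩
      · have : a * Q = f * P * Q := by rw [e1, hf]; ring
        rw [ha] at this ⊢; exact mul_right_cancel₀ hQ this
      · have : c * Q = f * R * Q := by rw [← e3, hf]; ring
        rw [hc] at this ⊢; exact mul_right_cancel₀ hQ this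
  · have hPa : P ∣ a := aux_dvd a P Q R hcop ⟨b, by linear_combination e1⟩ ⟨c, by linear_combination e2⟩
    obtain ⟨f, hf⟩ := hPa
    refine ⟨f, by rw [hf]; ring, ?_, ?_⟩
    · have : b * P = f * Q * P := by rw [← e1, hf]; ring
      rw [hb] at this ⊢; exact mul_right_cancel₀ hP this
    · have : c * P = f * R * P := by rw [← e2, hf]; ring
      rw [hc] at this ⊢; exact mul_right_cancel₀ hP this
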